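/- For every piecewise constant function ū : [0,T] → ℝ and every initial state w₀, there exists a sequence of continuous piecewise linear functions (vᵏ) with (vᵏ(0), w₀) in the closed strip {|u - w| ≤ ρ} such that the play outputs uᵏ := 𝒫[vᵏ, w₀] converge to ū in L¹(0,T) as k → ∞. -/

import Mathlib

open MeasureTheory Set Filter

/-- `f` is absolutely continuous on `[0,T]`: it is the integral of an integrable function. -/
def AbsContOn (T : ℝ) (f : ℝ → ℝ) : Prop :=
  ∃ f' : ℝ → ℝ, MeasureTheory.IntegrableOn f' (Set.Icc 0 T) ∧
    ∀ t ∈ Set.Icc (0:ℝ) T, f t = f 0 + ∫ s in Set.Ioc (0:ℝ) t, f' s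

/-- `w` is the output of the scalar play operator with parameter `ρ` on `[0,T]`,
applied to the input `u` with initial state `w₀`, characterized by the
variational inequality: `w` is absolutely continuous, `w 0 = w₀`,
`|u - w| ≤ ρ` on `[0,T]`, and `w' (u - w - v) ≥ 0` a.e. for all `|v| ≤ ρ`. -/
def IsPlayOutput (ρ T : ℝ) (u : ℝ → ℝ) (w₀ : ℝ) (w : ℝ → ℝ) : Prop :=
  w 0 = w₀ ∧
  ∃ w' : ℝ → ℝ, MeasureTheory.IntegrableOn w' (Set.Icc 0 T) ∧
    (∀ t ∈ Set.Icc (0:ℝ) T, w t = w₀ + ∫ s in Set.Ioc (0:ℝ) t, w' s) ∧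
    (∀ t ∈ Set.Icc (0:ℝ) T, |u t - w t| ≤ ρ) ∧
    (∀ᵐ t ∂(MeasureTheory.volume.restrict (Set.Icc (0:ℝ) T)),
      ∀ v : ℝ, |v| ≤ ρ → 0 ≤ w' t * (u t - w t - v))

/-- `f` is piecewise constant on `[0,T]` (constant on the open pieces of a finite partition). -/
def PWConstOn (T : ℝ) {β : Type*} (f : ℝ → β) : Prop :=
  ∃ (N : ℕ) (τ : ℕ → ℝ), τ 0 = 0 ∧ τ N = T ∧ (∀ i < N, τ i < τ (i+1)) ∧
    ∀ i < N, ∃ c : β, ∀ s ∈ Set.Ioo (τ i) (τ (i+1)), f s = c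

/-- `f` is continuous piecewise linear (affine) on `[0,T]`. -/
def PWLinearOn (T : ℝ) (f : ℝ → ℝ) : Prop :=
  ContinuousOn f (Set.Icc 0 T) ∧
  ∃ (N : ℕ) (τ : ℕ → ℝ), τ 0 = 0 ∧ τ N = T ∧ (∀ i < N, τ i < τ (i+1)) ∧
    ∀ i < N, ∃ a b : ℝ, ∀ s ∈ Set.Icc (τ i) (τ (i+1)), f s = a * s + b

noncomputable def clamp01 (x : ℝ) : ℝ := max 0 (min 1 x)
lemma clamp01_of_nonpos {x : ℝ} (h : x ≤ 0) : clamp01 x = 0 := by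
  simp [clamp01, min_eq_right (h.trans zero_le_one), max_eq_left h]
lemma clamp01_of_one_le {x : ℝ} (h : 1 ≤ x) : clamp01 x = 1 := by
  simp [clamp01, min_eq_left h]
lemma clamp01_nonneg (x : ℝ) : 0 ≤ clamp01 x := le_max_left _ _
lemma clamp01_le_one (x : ℝ) : clamp01 x ≤ 1 := max_le zero_le_one (min_le_left _ _)
lemma clamp01_of_mem {x : ℝ} (h0 : 0 ≤ x) (h1 : x ≤ 1) : clamp01 x = x := by
  simp [clamp01, min_eq_right h1, max_eq_right h0]
lemma continuous_clamp01 : Continuous clamp01 :=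
  continuous_const.max (continuous_const.min continuous_id)
noncomputable def sgn (x : ℝ) : ℝ := if 0 < x then 1 else if x < 0 then -1 else 0
lemma abs_sgn_le_one (x : ℝ) : |sgn x| ≤ 1 := by unfold sgn; split_ifs <;> simp

section Constr
variable (N : ℕ) (τ : ℕ → ℝ) (w₀ : ℝ) (c : ℕ → ℝ) (δ : ℝ)

/-- values: pwF 0 = w₀, pwF (j+1) = c j -/
noncomputable def pwF : ℕ → ℝ := fun j => if j = 0 then w₀ else c (j-1)

noncomputable def pwD (j : ℕ) : ℝ := pwF w₀ c (j+1) - pwF w₀ c j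

/-- ramp function of piece j -/
noncomputable def pwR (j : ℕ) (t : ℝ) : ℝ := clamp01 ((t - τ j)/δ)

/-- flat transition function of piece j -/
noncomputable def pwQ (j : ℕ) (t : ℝ) : ℝ := clamp01 ((t - (τ j + δ))/(τ (j+1) - (τ j + δ)))

noncomputable def pwW (t : ℝ) : ℝ := w₀ + ∑ j ∈ Finset.range N, pwD w₀ c j * pwR τ δ j t

noncomputable def pwW' (t : ℝ) : ℝ :=
  ∑ j ∈ Finset.range N, Set.indicator (Set.Ioo (τ j) (τ j + δ)) (fun _ => pwD w₀ c j / δ) t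

noncomputable def pwS (t : ℝ) : ℝ :=
  sgn (pwD w₀ c 0) + ∑ j ∈ Finset.range (N-1),
    (sgn (pwD w₀ c (j+1)) - sgn (pwD w₀ c j)) * pwQ τ δ j t

noncomputable def pwV (ρ : ℝ) (t : ℝ) : ℝ := pwW N τ w₀ c δ t + ρ * pwS N τ w₀ c δ t

end Constr

section Lemmas
variable {N : ℕ} {τ : ℕ → ℝ} {w₀ : ℝ} {c : ℕ → ℝ} {δ : ℝ}
variable (hδ : 0 < δ) (hτ : ∀ i < N, τ i < τ (i+1)) (hgap : ∀ i < N, δ < τ (i+1) - τ i)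

lemma tau_mono (hτ : ∀ i < N, τ i < τ (i+1)) : ∀ i j, i ≤ j → j ≤ N → τ i ≤ τ j := by
  intro i j hij hjN
  induction j with
  | zero => simp_all
  | succ m ih =>
    rcases Nat.lt_or_ge i (m+1) with h | h
    · exact (ih (Nat.lt_succ_iff.mp h) (le_trans (Nat.le_succ m) hjN)).trans
        (hτ m (Nat.lt_of_succ_le hjN)).le
    · have : i = m + 1 := le_antisymm hij h
      simp [this]

lemma tau_cover (hτ : ∀ i < N, τ i < τ (i+1)) (hN : 0 < N) :
    ∀ t, τ 0 ≤ t → t ≤ τ N → ∃ i < N, τ i ≤ t ∧ t ≤ τ (i+1) := by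
  induction N with
  | zero => omega
  | succ m ih =>
    intro t h0 h1
    rcases Nat.eq_zero_or_pos m with hm | hm
    · exact ⟨0, by omega, by simpa [hm] using And.intro h0 h1⟩
    · rcases le_total t (τ m) with h | h
      · obtain ⟨i, hi, h⟩ := ih (fun i hi => hτ i (by omega)) hm t h0 h
        exact ⟨i, by omega, h⟩
      · exact ⟨m, by omega, h, h1⟩

include hδ in
lemma pwR_left {j : ℕ} {t : ℝ} (h : t ≤ τ j) : pwR τ δ j t = 0 :=
  clamp01_of_nonpos (div_nonpos_of_nonpos_of_nonneg (by linarith) hδ.le)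

include hδ in
lemma pwR_right {j : ℕ} {t : ℝ} (h : τ j + δ ≤ t) : pwR τ δ j t = 1 :=
  clamp01_of_one_le ((le_div_iff₀ hδ).2 (by linarith))

include hδ hgap in
lemma pwQ_left {j : ℕ} {t : ℝ} (hj : j < N) (h : t ≤ τ j + δ) : pwQ τ δ j t = 0 := by
  have hD : 0 < τ (j+1) - (τ j + δ) := by have := hgap j hj; linarith
  exact clamp01_of_nonpos (div_nonpos_of_nonpos_of_nonneg (by linarith) hD.le)

include hδ hgap in
lemma pwQ_right {j : ℕ} {t : ℝ} (hj : j < N) (h : τ (j+1) ≤ t) : pwQ τ δ j t = 1 := by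
  have hD : 0 < τ (j+1) - (τ j + δ) := by have := hgap j hj; linarith
  exact clamp01_of_one_le ((le_div_iff₀ hD).2 (by linarith))

include hδ hτ hgap in
lemma pwW_ramp {i : ℕ} {t : ℝ} (hi : i < N) (h1 : τ i ≤ t) (h2 : t ≤ τ i + δ) :
    pwW N τ w₀ c δ t = pwF w₀ c i + pwD w₀ c i * pwR τ δ i t := by
  unfold pwW
  have hsub : Finset.range (i+1) ⊆ Finset.range N := by
    intro x hx; simp only [Finset.mem_range] at *; omega
  have hzero : ∀ j ∈ Finset.range N, j ∉ Finset.range (i+1) → pwD w₀ c j * pwR τ δ j t = 0 := by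
    intro j hj hji
    simp only [Finset.mem_range] at hj hji
    have : t ≤ τ j := by
      have h3 : τ (i+1) ≤ τ j := tau_mono hτ (i+1) j (by omega) (by omega)
      have := hgap i hi; linarith
    rw [pwR_left hδ this]; ring
  rw [← Finset.sum_subset hsub hzero, Finset.sum_range_succ]
  have hone : ∀ j ∈ Finset.range i, pwD w₀ c j * pwR τ δ j t = pwD w₀ c j * 1 := by
    intro j hj
    simp only [Finset.mem_range] at hj
    rw [pwR_right hδ]
    have h3 : τ (j+1) ≤ τ i := tau_mono hτ (j+1) i (by omega) (by omega)
    have := hgap j (by omega); linarith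
  rw [Finset.sum_congr rfl hone]
  have htel : ∑ j ∈ Finset.range i, pwD w₀ c j * 1 = pwF w₀ c i - pwF w₀ c 0 := by
    simp only [mul_one, pwD]
    exact Finset.sum_range_sub (pwF w₀ c) i
  rw [htel]
  simp [pwF]
  ring

include hδ hτ hgap in
lemma pwW_flat {i : ℕ} {t : ℝ} (hi : i < N) (h1 : τ i + δ ≤ t) (h2 : t ≤ τ (i+1)) :
    pwW N τ w₀ c δ t = c i := by
  unfold pwW
  have hsub : Finset.range (i+1) ⊆ Finset.range N := by
    intro x hx; simp only [Finset.mem_range] at *; omega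
  have hzero : ∀ j ∈ Finset.range N, j ∉ Finset.range (i+1) → pwD w₀ c j * pwR τ δ j t = 0 := by
    intro j hj hji
    simp only [Finset.mem_range] at hj hji
    have h3 : τ (i+1) ≤ τ j := tau_mono hτ (i+1) j (by omega) (by omega)
    rw [pwR_left hδ (by linarith)]; ring
  rw [← Finset.sum_subset hsub hzero]
  have hone : ∀ j ∈ Finset.range (i+1), pwD w₀ c j * pwR τ δ j t = pwD w₀ c j * 1 := by
    intro j hj
    simp only [Finset.mem_range] at hj
    rw [pwR_right hδ]
    have h3 : τ j ≤ τ i := tau_mono hτ j i (by omega) (by omega)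
    linarith
  rw [Finset.sum_congr rfl hone]
  simp only [mul_one, pwD]
  rw [Finset.sum_range_sub (pwF w₀ c)]
  simp [pwF]

include hδ hτ hgap in
lemma pwS_ramp {i : ℕ} {t : ℝ} (hi : i < N) (h1 : τ i ≤ t) (h2 : t ≤ τ i + δ) :
    pwS N τ w₀ c δ t = sgn (pwD w₀ c i) := by
  unfold pwS
  have hsub : Finset.range i ⊆ Finset.range (N-1) := by
    intro x hx; simp only [Finset.mem_range] at *; omega
  have hzero : ∀ j ∈ Finset.range (N-1), j ∉ Finset.range i →
      (sgn (pwD w₀ c (j+1)) - sgn (pwD w₀ c j)) * pwQ τ δ j t = 0 := by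
    intro j hj hji
    simp only [Finset.mem_range] at hj hji
    have h3 : τ i ≤ τ j := tau_mono hτ i j (by omega) (by omega)
    rw [pwQ_left hδ hgap (by omega) (by linarith)]; ring
  rw [← Finset.sum_subset hsub hzero]
  have hone : ∀ j ∈ Finset.range i, (sgn (pwD w₀ c (j+1)) - sgn (pwD w₀ c j)) * pwQ τ δ j t
      = sgn (pwD w₀ c (j+1)) - sgn (pwD w₀ c j) := by
    intro j hj
    simp only [Finset.mem_range] at hj
    rw [pwQ_right hδ hgap (by omega), mul_one]
    exact tau_mono hτ (j+1) i (by omega) (by omega) |>.trans h1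
  rw [Finset.sum_congr rfl hone, Finset.sum_range_sub (fun j => sgn (pwD w₀ c j))]
  ring

include hδ hτ hgap in
lemma pwS_flat {i : ℕ} {t : ℝ} (hi : i < N) (h1 : τ i + δ ≤ t) (h2 : t ≤ τ (i+1)) :
    pwS N τ w₀ c δ t = sgn (pwD w₀ c i) +
      (if i + 1 < N then (sgn (pwD w₀ c (i+1)) - sgn (pwD w₀ c i)) * pwQ τ δ i t else 0) := by
  unfold pwS
  by_cases hN : i + 1 < N
  · have hsub : Finset.range (i+1) ⊆ Finset.range (N-1) := by
      intro x hx; simp only [Finset.mem_range] at *; omega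
    have hzero : ∀ j ∈ Finset.range (N-1), j ∉ Finset.range (i+1) →
        (sgn (pwD w₀ c (j+1)) - sgn (pwD w₀ c j)) * pwQ τ δ j t = 0 := by
      intro j hj hji
      simp only [Finset.mem_range] at hj hji
      have h3 : τ (i+1) ≤ τ j := tau_mono hτ (i+1) j (by omega) (by omega)
      rw [pwQ_left hδ hgap (by omega) (by linarith)]; ring
    rw [← Finset.sum_subset hsub hzero, Finset.sum_range_succ]
    have hone : ∀ j ∈ Finset.range i, (sgn (pwD w₀ c (j+1)) - sgn (pwD w₀ c j)) * pwQ τ δ j t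
        = sgn (pwD w₀ c (j+1)) - sgn (pwD w₀ c j) := by
      intro j hj
      simp only [Finset.mem_range] at hj
      rw [pwQ_right hδ hgap (by omega), mul_one]
      have := tau_mono hτ (j+1) i (by omega) (by omega); linarith
    rw [Finset.sum_congr rfl hone, Finset.sum_range_sub (fun j => sgn (pwD w₀ c j))]
    simp [hN]; ring
  · -- i = N - 1 : all q_j = 1
    have hone : ∀ j ∈ Finset.range (N-1), (sgn (pwD w₀ c (j+1)) - sgn (pwD w₀ c j)) * pwQ τ δ j t
        = sgn (pwD w₀ c (j+1)) - sgn (pwD w₀ c j) := by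
      intro j hj
      simp only [Finset.mem_range] at hj
      rw [pwQ_right hδ hgap (by omega), mul_one]
      have := tau_mono hτ (j+1) i (by omega) (by omega); linarith
    rw [Finset.sum_congr rfl hone, Finset.sum_range_sub (fun j => sgn (pwD w₀ c j))]
    have : N - 1 = i := by omega
    simp [hN, this]

include hδ hτ hgap in
lemma abs_pwS_le_one (hN : 0 < N) {t : ℝ} (h0 : τ 0 ≤ t) (hT : t ≤ τ N) :
    |pwS N τ w₀ c δ t| ≤ 1 := by
  obtain ⟨i, hi, hti, hti'⟩ := tau_cover hτ hN t h0 hT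
  rcases le_total t (τ i + δ) with h | h
  · rw [pwS_ramp hδ hτ hgap hi hti h]; exact abs_sgn_le_one _
  · rw [pwS_flat hδ hτ hgap hi h hti']
    by_cases hN1 : i + 1 < N
    · simp only [hN1, if_true]
      set q := pwQ τ δ i t with hq
      have hq0 : 0 ≤ q := clamp01_nonneg _
      have hq1 : q ≤ 1 := clamp01_le_one _
      have e1 := abs_sgn_le_one (pwD w₀ c i)
      have e2 := abs_sgn_le_one (pwD w₀ c (i+1))
      rw [abs_le] at e1 e2 ⊢
      constructor <;> nlinarith [e1.1, e1.2, e2.1, e2.2]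
    · simp only [hN1, if_false, add_zero]; exact abs_sgn_le_one _

lemma pwR_continuous (j : ℕ) : Continuous (pwR τ δ j) :=
  continuous_clamp01.comp ((continuous_id.sub continuous_const).div_const _)

lemma pwQ_continuous (j : ℕ) : Continuous (pwQ τ δ j) :=
  continuous_clamp01.comp ((continuous_id.sub continuous_const).div_const _)

lemma pwW_continuous : Continuous (pwW N τ w₀ c δ) := by
  unfold pwW
  exact continuous_const.add (continuous_finset_sum _ fun j _ =>
    continuous_const.mul (pwR_continuous j))

lemma pwS_continuous : Continuous (pwS N τ w₀ c δ) := by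
  unfold pwS
  exact continuous_const.add (continuous_finset_sum _ fun j _ =>
    continuous_const.mul (pwQ_continuous j))

lemma pwV_continuous (ρ : ℝ) : Continuous (pwV N τ w₀ c δ ρ) := by
  unfold pwV
  exact pwW_continuous.add (continuous_const.mul pwS_continuous)

/-- refined partition -/
noncomputable def tau2 (τ : ℕ → ℝ) (δ : ℝ) (m : ℕ) : ℝ :=
  if m % 2 = 0 then τ (m / 2) else τ (m / 2) + δ

include hδ hgap in
lemma tau2_mono : ∀ m < 2 * N, tau2 τ δ m < tau2 τ δ (m+1) := by
  intro m hm
  rcases Nat.even_or_odd m with ⟨l, hl⟩ | ⟨l, hl⟩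
  · have h1 : m % 2 = 0 := by omega
    have h2 : (m+1) % 2 = 1 := by omega
    have h3 : (m+1)/2 = m/2 := by omega
    simp only [tau2, h1, h2, h3]
    norm_num
    linarith
  · have h1 : m % 2 = 1 := by omega
    have h2 : (m+1) % 2 = 0 := by omega
    have h3 : (m+1)/2 = m/2 + 1 := by omega
    simp only [tau2, h1, h2, h3]
    norm_num
    have := hgap (m/2) (by omega)
    linarith

include hδ hτ hgap in
lemma pwR_affine {j m : ℕ} (hj : j < N) (hm : m < 2 * N) :
    ∃ a b : ℝ, ∀ t ∈ Set.Icc (tau2 τ δ m) (tau2 τ δ (m+1)), pwR τ δ j t = a * t + b := by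
  have hmono2 := tau2_mono (N := N) hδ hgap
  rcases lt_trichotomy m (2*j) with h | h | h
  · refine ⟨0, 0, fun t ht => ?_⟩
    have : tau2 τ δ (m+1) ≤ tau2 τ δ (2*j) := tau_mono hmono2 (m+1) (2*j) (by omega) (by omega)
    have h2j : tau2 τ δ (2*j) = τ j := by simp [tau2, Nat.mul_div_cancel_left j (by norm_num : 0 < 2)]
    rw [pwR_left hδ (by rw [← h2j]; exact ht.2.trans this)]
    ring
  · subst h
    refine ⟨1/δ, -(τ j)/δ, fun t ht => ?_⟩
    have h2j : tau2 τ δ (2*j) = τ j := by simp [tau2, Nat.mul_div_cancel_left j (by norm_num : 0 < 2)]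
    have h2j1 : tau2 τ δ (2*j+1) = τ j + δ := by
      have e1 : (2*j+1) % 2 = 1 := by omega
      have e2 : (2*j+1) / 2 = j := by omega
      simp [tau2, e1, e2]
    rw [h2j] at ht
    rw [h2j1] at ht
    unfold pwR
    rw [clamp01_of_mem (div_nonneg (by linarith [ht.1]) hδ.le)
      ((div_le_one hδ).2 (by linarith [ht.2]))]
    field_simp
    ring
  · refine ⟨0, 1, fun t ht => ?_⟩
    have : tau2 τ δ (2*j+1) ≤ tau2 τ δ m := tau_mono hmono2 (2*j+1) m (by omega) (by omega)
    have h2j1 : tau2 τ δ (2*j+1) = τ j + δ := by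
      have e1 : (2*j+1) % 2 = 1 := by omega
      have e2 : (2*j+1) / 2 = j := by omega
      simp [tau2, e1, e2]
    rw [pwR_right hδ (by rw [← h2j1]; exact this.trans ht.1)]
    ring

include hδ hτ hgap in
lemma pwQ_affine {j m : ℕ} (hj : j < N) (hm : m < 2 * N) :
    ∃ a b : ℝ, ∀ t ∈ Set.Icc (tau2 τ δ m) (tau2 τ δ (m+1)), pwQ τ δ j t = a * t + b := by
  have hmono2 := tau2_mono (N := N) hδ hgap
  have h2j1 : tau2 τ δ (2*j+1) = τ j + δ := by
    have e1 : (2*j+1) % 2 = 1 := by omega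
    have e2 : (2*j+1) / 2 = j := by omega
    simp [tau2, e1, e2]
  have h2j2 : tau2 τ δ (2*j+2) = τ (j+1) := by
    have e1 : (2*j+2) % 2 = 0 := by omega
    have e2 : (2*j+2) / 2 = j + 1 := by omega
    simp [tau2, e1, e2]
  have hD : 0 < τ (j+1) - (τ j + δ) := by have := hgap j hj; linarith
  rcases lt_trichotomy m (2*j+1) with h | h | h
  · refine ⟨0, 0, fun t ht => ?_⟩
    have : tau2 τ δ (m+1) ≤ tau2 τ δ (2*j+1) := tau_mono hmono2 (m+1) (2*j+1) (by omega) (by omega)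
    rw [pwQ_left hδ hgap hj (by rw [← h2j1]; exact ht.2.trans this)]
    ring
  · subst h
    refine ⟨1/(τ (j+1) - (τ j + δ)), -(τ j + δ)/(τ (j+1) - (τ j + δ)), fun t ht => ?_⟩
    rw [h2j1] at ht
    rw [show 2*j+1+1 = 2*j+2 by ring, h2j2] at ht
    unfold pwQ
    rw [clamp01_of_mem (div_nonneg (by linarith [ht.1]) hD.le)
      ((div_le_one hD).2 (by linarith [ht.2]))]
    field_simp
    ring
  · refine ⟨0, 1, fun t ht => ?_⟩
    have : tau2 τ δ (2*j+2) ≤ tau2 τ δ m := tau_mono hmono2 (2*j+2) m (by omega) (by omega)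
    rw [pwQ_right hδ hgap hj (by rw [← h2j2]; exact this.trans ht.1)]
    ring

include hδ hτ hgap in
lemma pwV_pwlinear (hN : 0 < N) (ρ : ℝ) (hτ0 : τ 0 = 0) :
    PWLinearOn (τ N) (pwV N τ w₀ c δ ρ) := by
  refine ⟨(pwV_continuous ρ).continuousOn, 2*N, tau2 τ δ, ?_, ?_, tau2_mono hδ hgap, ?_⟩
  · simp [tau2, hτ0]
  · simp [tau2, Nat.mul_div_cancel_left N (by norm_num : 0 < 2)]
  · intro m hm
    -- affine pieces for each summand
    have hR : ∀ j ∈ Finset.range N, ∃ a b : ℝ,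
        ∀ t ∈ Set.Icc (tau2 τ δ m) (tau2 τ δ (m+1)), pwR τ δ j t = a * t + b := by
      intro j hj
      exact pwR_affine hδ hτ hgap (Finset.mem_range.mp hj) hm
    have hQ : ∀ j ∈ Finset.range (N-1), ∃ a b : ℝ,
        ∀ t ∈ Set.Icc (tau2 τ δ m) (tau2 τ δ (m+1)), pwQ τ δ j t = a * t + b := by
      intro j hj
      exact pwQ_affine hδ hτ hgap (by have := Finset.mem_range.mp hj; omega) hm
    choose! A B hAB using hR
    choose! A' B' hA'B' using hQ
    refine ⟨(∑ j ∈ Finset.range N, pwD w₀ c j * A j) +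
      ρ * ∑ j ∈ Finset.range (N-1), (sgn (pwD w₀ c (j+1)) - sgn (pwD w₀ c j)) * A' j,
      (w₀ + ∑ j ∈ Finset.range N, pwD w₀ c j * B j) +
      ρ * (sgn (pwD w₀ c 0) + ∑ j ∈ Finset.range (N-1),
        (sgn (pwD w₀ c (j+1)) - sgn (pwD w₀ c j)) * B' j), fun t ht => ?_⟩
    have e1 : pwW N τ w₀ c δ t =
        (∑ j ∈ Finset.range N, pwD w₀ c j * A j) * t
          + (w₀ + ∑ j ∈ Finset.range N, pwD w₀ c j * B j) := by
      unfold pwW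
      rw [Finset.sum_congr rfl (fun j hj => by rw [hAB j hj t ht] :
        ∀ j ∈ Finset.range N, pwD w₀ c j * pwR τ δ j t = pwD w₀ c j * (A j * t + B j))]
      simp only [mul_add, Finset.sum_add_distrib, Finset.sum_mul, mul_assoc]
      ring
    have e2 : pwS N τ w₀ c δ t =
        (∑ j ∈ Finset.range (N-1), (sgn (pwD w₀ c (j+1)) - sgn (pwD w₀ c j)) * A' j) * t
          + (sgn (pwD w₀ c 0) + ∑ j ∈ Finset.range (N-1),
              (sgn (pwD w₀ c (j+1)) - sgn (pwD w₀ c j)) * B' j) := by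
      unfold pwS
      rw [Finset.sum_congr rfl (fun j hj => by rw [hA'B' j hj t ht] :
        ∀ j ∈ Finset.range (N-1), (sgn (pwD w₀ c (j+1)) - sgn (pwD w₀ c j)) * pwQ τ δ j t
          = (sgn (pwD w₀ c (j+1)) - sgn (pwD w₀ c j)) * (A' j * t + B' j))]
      simp only [mul_add, Finset.sum_add_distrib, Finset.sum_mul, mul_assoc]
      ring
    unfold pwV
    rw [e1, e2]
    ring

lemma indicator_integrable {a b C : ℝ} :
    Integrable (Set.indicator (Set.Ioo a b) (fun _ => C)) volume := by
  rw [integrable_indicator_iff measurableSet_Ioo]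
  refine integrableOn_const ?_
  rw [Real.volume_Ioo]
  exact ENNReal.ofReal_lt_top.ne

include hδ in
lemma integral_indicator_Ioc {a t C : ℝ} (ha : 0 ≤ a) (ht : 0 ≤ t) :
    ∫ s in Set.Ioc 0 t, Set.indicator (Set.Ioo a (a+δ)) (fun _ => C) s
      = C * δ * clamp01 ((t - a)/δ) := by
  rw [MeasureTheory.integral_indicator measurableSet_Ioo,
    MeasureTheory.Measure.restrict_restrict measurableSet_Ioo, setIntegral_const]
  rcases le_or_gt (a + δ) t with hbt | hbt
  · have hint : Set.Ioo a (a+δ) ∩ Set.Ioc 0 t = Set.Ioo a (a+δ) := by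
      apply Set.inter_eq_left.2
      intro x hx
      exact ⟨lt_of_le_of_lt ha hx.1, le_trans hx.2.le hbt⟩
    rw [hint, Real.volume_real_Ioo_of_le (by linarith), clamp01_of_one_le ((le_div_iff₀ hδ).2 (by linarith))]
    simp; ring
  · rcases le_or_gt t a with hta | hta
    · have hint : Set.Ioo a (a+δ) ∩ Set.Ioc 0 t = ∅ := by
        ext x; simp only [Set.mem_inter_iff, Set.mem_Ioo, Set.mem_Ioc, Set.mem_empty_iff_false,
          iff_false, not_and]
        intro h1 _ _; linarith
      rw [hint]
      rw [clamp01_of_nonpos (div_nonpos_of_nonpos_of_nonneg (by linarith) hδ.le)]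
      simp
    · have hint : Set.Ioo a (a+δ) ∩ Set.Ioc 0 t = Set.Ioc a t := by
        ext x; simp only [Set.mem_inter_iff, Set.mem_Ioo, Set.mem_Ioc]
        constructor
        · rintro ⟨⟨h1, h2⟩, h3, h4⟩; exact ⟨h1, h4⟩
        · rintro ⟨h1, h2⟩
          exact ⟨⟨h1, lt_of_le_of_lt h2 hbt⟩, lt_of_le_of_lt ha h1, h2⟩
      rw [hint, Real.volume_real_Ioc_of_le (by linarith),
        clamp01_of_mem (div_nonneg (by linarith) hδ.le) ((div_le_one hδ).2 (by linarith))]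
      field_simp
      ring

lemma pwW'_integrable : Integrable (pwW' N τ w₀ c δ) volume := by
  unfold pwW'
  exact integrable_finset_sum _ fun j _ => indicator_integrable

include hδ hτ in
lemma integral_pwW' (hτ0 : τ 0 = 0) {t : ℝ} (ht : 0 ≤ t) :
    ∫ s in Set.Ioc 0 t, pwW' N τ w₀ c δ s
      = ∑ j ∈ Finset.range N, pwD w₀ c j * pwR τ δ j t := by
  unfold pwW'
  rw [MeasureTheory.integral_finset_sum _ fun j _ => indicator_integrable.integrableOn]
  refine Finset.sum_congr rfl fun j hj => ?_
  simp only [Finset.mem_range] at hj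
  have hτj : 0 ≤ τ j := by
    rw [← hτ0]; exact tau_mono hτ 0 j (by omega) (by omega)
  rw [integral_indicator_Ioc hδ hτj ht]
  unfold pwR
  field_simp

include hδ hτ hgap in
lemma pwW'_ramp {i : ℕ} {t : ℝ} (hi : i < N) (h1 : τ i < t) (h2 : t < τ i + δ) :
    pwW' N τ w₀ c δ t = pwD w₀ c i / δ := by
  unfold pwW'
  rw [Finset.sum_eq_single_of_mem i (Finset.mem_range.2 hi)]
  · rw [Set.indicator_of_mem (Set.mem_Ioo.2 ⟨h1, h2⟩)]
  · intro j hj hji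
    simp only [Finset.mem_range] at hj
    apply Set.indicator_of_notMem
    rcases Nat.lt_or_ge j i with h | h
    · have h3 : τ (j+1) ≤ τ i := tau_mono hτ (j+1) i (by omega) (by omega)
      have := hgap j (by omega)
      exact fun hmem => absurd hmem.2 (by linarith)
    · have hji' : i < j := by omega
      have h3 : τ (i+1) ≤ τ j := tau_mono hτ (i+1) j (by omega) (by omega)
      have := hgap i hi
      exact fun hmem => absurd hmem.1 (by linarith)

include hδ hτ hgap in
lemma pwW'_flat {i : ℕ} {t : ℝ} (hi : i < N) (h1 : τ i + δ < t) (h2 : t < τ (i+1)) :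
    pwW' N τ w₀ c δ t = 0 := by
  unfold pwW'
  refine Finset.sum_eq_zero fun j hj => ?_
  simp only [Finset.mem_range] at hj
  apply Set.indicator_of_notMem
  rcases Nat.lt_or_ge j (i+1) with h | h
  · have h3 : τ j + δ ≤ τ i + δ := by
      have := tau_mono hτ j i (by omega) (by omega); linarith
    exact fun hmem => absurd hmem.2 (by linarith)
  · have h3 : τ (i+1) ≤ τ j := tau_mono hτ (i+1) j (by omega) (by omega)
    exact fun hmem => absurd hmem.1 (by linarith)

end Lemmas



/-- Approximation lemma: for every piecewise constant `ū` on `[0,T]` and every initial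
state `w₀`, there exist continuous piecewise linear inputs `vᵏ`, admissible for `w₀`,
whose play outputs `uᵏ = 𝒫[vᵏ,w₀]` converge to `ū` in `L¹(0,T)`. -/
theorem play_L1_approximation_of_pwconst (ρ T : ℝ) (hρ : 0 < ρ) (hT : 0 < T)
    (ubar : ℝ → ℝ) (hubar : PWConstOn T ubar) (w₀ : ℝ) :
    ∃ v : ℕ → ℝ → ℝ, ∃ uk : ℕ → ℝ → ℝ,
      (∀ k, PWLinearOn T (v k)) ∧
      (∀ k, |w₀ - v k 0| ≤ ρ) ∧
      (∀ k, IsPlayOutput ρ T (v k) w₀ (uk k)) ∧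
      Filter.Tendsto (fun k => ∫ t in Set.Icc (0:ℝ) T, |uk k t - ubar t|)
        Filter.atTop (nhds 0) := by
  obtain ⟨N, τ, hτ0, hτN, hmono, hcex⟩ := hubar
  have hN : 0 < N := by
    by_contra h
    push_neg at h
    interval_cases N
    rw [hτ0] at hτN
    linarith
  choose! c hc using hcex
  -- minimal gap
  set G : ℝ := (Finset.range N).inf' (Finset.nonempty_range_iff.2 hN.ne') (fun i => τ (i+1) - τ i) with hGdef
  have hG : 0 < G := by
    rw [hGdef]
    rw [Finset.lt_inf'_iff]
    intro i hi
    exact sub_pos.2 (hmono i (Finset.mem_range.mp hi))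
  have hGle : ∀ i < N, G ≤ τ (i+1) - τ i := fun i hi =>
    Finset.inf'_le _ (Finset.mem_range.2 hi)
  set δ : ℕ → ℝ := fun k => G / (k + 2) with hδdef
  have hδpos : ∀ k, 0 < δ k := fun k => div_pos hG (by positivity)
  have hδgap : ∀ k, ∀ i < N, δ k < τ (i+1) - τ i := by
    intro k i hi
    have h1 : δ k < G := div_lt_self hG (by have : (0:ℝ) ≤ k := Nat.cast_nonneg k; linarith)
    exact h1.trans_le (hGle i hi)
  refine ⟨fun k => pwV N τ w₀ c (δ k) ρ, fun k => pwW N τ w₀ c (δ k), ?_, ?_, ?_, ?_⟩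
  · -- PWLinearOn
    intro k
    rw [← hτN]
    exact pwV_pwlinear (hδpos k) hmono (hδgap k) hN ρ hτ0
  · -- initial admissibility
    intro k
    show |w₀ - pwV N τ w₀ c (δ k) ρ 0| ≤ ρ
    have h1 : pwW N τ w₀ c (δ k) 0 = w₀ := by
      rw [pwW_ramp (hδpos k) hmono (hδgap k) hN (le_of_eq hτ0) (by rw [hτ0]; linarith [hδpos k]),
        pwR_left (hδpos k) (le_of_eq hτ0.symm)]
      simp [pwF]
    have h2 : pwS N τ w₀ c (δ k) 0 = sgn (pwD w₀ c 0) :=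
      pwS_ramp (hδpos k) hmono (hδgap k) hN (le_of_eq hτ0) (by rw [hτ0]; linarith [hδpos k])
    have h3 : pwV N τ w₀ c (δ k) ρ 0 = w₀ + ρ * sgn (pwD w₀ c 0) := by
      unfold pwV; rw [h1, h2]
    rw [h3]
    have := abs_sgn_le_one (pwD w₀ c 0)
    rw [abs_le] at this ⊢
    constructor <;> nlinarith [this.1, this.2]
  · -- IsPlayOutput
    intro k
    have hW0 : pwW N τ w₀ c (δ k) 0 = w₀ := by
      rw [pwW_ramp (hδpos k) hmono (hδgap k) hN (le_of_eq hτ0) (by rw [hτ0]; linarith [hδpos k]),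
        pwR_left (hδpos k) (le_of_eq hτ0.symm)]
      simp [pwF]
    refine ⟨hW0, pwW' N τ w₀ c (δ k), pwW'_integrable.integrableOn, ?_, ?_, ?_⟩
    · intro t ht
      show pwW N τ w₀ c (δ k) t = w₀ + ∫ s in Set.Ioc (0:ℝ) t, pwW' N τ w₀ c (δ k) s
      rw [integral_pwW' (hδpos k) hmono hτ0 ht.1]
      rfl
    · intro t ht
      show |pwV N τ w₀ c (δ k) ρ t - pwW N τ w₀ c (δ k) t| ≤ ρ
      have h0t : τ 0 ≤ t := by rw [hτ0]; exact ht.1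
      have htT : t ≤ τ N := by rw [hτN]; exact ht.2
      have hS := abs_pwS_le_one (w₀ := w₀) (c := c) (hδpos k) hmono (hδgap k) hN h0t htT
      have : pwV N τ w₀ c (δ k) ρ t - pwW N τ w₀ c (δ k) t = ρ * pwS N τ w₀ c (δ k) t := by
        unfold pwV; ring
      rw [this, abs_mul, abs_of_pos hρ]
      nlinarith
    · -- a.e. variational inequality
      have hZ : (volume : Measure ℝ) (⋃ i ∈ Finset.range (N+1), ({τ i} ∪ {τ i + δ k})) = 0 := by
        refine measure_biUnion_null_iff (Finset.countable_toSet _) |>.2 fun i _ => ?_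
        rw [measure_union_null_iff]
        exact ⟨measure_singleton _, measure_singleton _⟩
      have hae1 : ∀ᵐ t ∂(volume.restrict (Set.Icc (0:ℝ) T)),
          t ∉ ⋃ i ∈ Finset.range (N+1), ({τ i} ∪ {τ i + δ k}) :=
        ae_restrict_of_ae (measure_eq_zero_iff_ae_notMem.1 hZ)
      have hae2 : ∀ᵐ t ∂(volume.restrict (Set.Icc (0:ℝ) T)), t ∈ Set.Icc (0:ℝ) T :=
        ae_restrict_mem measurableSet_Icc
      filter_upwards [hae1, hae2] with t htZ ht
      intro vv hvv
      show 0 ≤ pwW' N τ w₀ c (δ k) t *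
        (pwV N τ w₀ c (δ k) ρ t - pwW N τ w₀ c (δ k) t - vv)
      obtain ⟨i, hi, hti, hti'⟩ := tau_cover hmono hN t (by rw [hτ0]; exact ht.1)
        (by rw [hτN]; exact ht.2)
      have hne : ∀ j ≤ N, t ≠ τ j ∧ t ≠ τ j + δ k := by
        intro j hj
        constructor
        · intro h
          exact htZ (Set.mem_biUnion (x := j) (Finset.mem_range.2 (by omega))
            (Set.mem_union_left _ (by rw [h]; exact Set.mem_singleton _)))
        · intro h
          exact htZ (Set.mem_biUnion (x := j) (Finset.mem_range.2 (by omega))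
            (Set.mem_union_right _ (by rw [h]; exact Set.mem_singleton _)))
      have h1 : τ i < t := lt_of_le_of_ne hti (Ne.symm (hne i (by omega)).1)
      have h2 : t < τ (i+1) := lt_of_le_of_ne hti' (hne (i+1) (by omega)).1
      have h3 : t ≠ τ i + δ k := (hne i (by omega)).2
      rcases lt_or_gt_of_ne h3 with h4 | h4
      · -- on ramp
        rw [pwW'_ramp (hδpos k) hmono (hδgap k) hi h1 h4]
        have hvw : pwV N τ w₀ c (δ k) ρ t - pwW N τ w₀ c (δ k) t
            = ρ * sgn (pwD w₀ c i) := by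
          have := pwS_ramp (w₀ := w₀) (c := c) (hδpos k) hmono (hδgap k) hi h1.le h4.le
          unfold pwV
          rw [this]; ring
        rw [hvw]
        rcases lt_trichotomy (pwD w₀ c i) 0 with hD | hD | hD
        · rw [show sgn (pwD w₀ c i) = -1 by simp [sgn, hD, not_lt.2 hD.le, asymm hD]]
          have hdn : pwD w₀ c i / δ k ≤ 0 :=
            div_nonpos_of_nonpos_of_nonneg hD.le (hδpos k).le
          have hv1 : -ρ ≤ vv := (abs_le.1 hvv).1
          nlinarith
        · simp [hD]
        · rw [show sgn (pwD w₀ c i) = 1 by simp [sgn, hD]]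
          apply mul_nonneg
          · exact div_nonneg hD.le (hδpos k).le
          · rw [abs_le] at hvv; linarith
      · -- on flat
        rw [pwW'_flat (hδpos k) hmono (hδgap k) hi h4 h2]
        simp
  · -- L¹ convergence
    set B : ℝ := ∑ j ∈ Finset.range N, |pwD w₀ c j| with hBdef
    have hB : 0 ≤ B := Finset.sum_nonneg fun j _ => abs_nonneg _
    -- integrability of ubar on [0,T]
    have husimp : ∀ k : ℕ, Integrable
        (fun t => ∑ i ∈ Finset.range N,
          Set.indicator (Set.Ioo (τ i) (τ (i+1))) (fun _ => c i) t) volume :=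
      fun _ => integrable_finset_sum _ fun i _ => indicator_integrable
    -- a.e. facts shared
    have hZmeas : ∀ k : ℕ, (volume : Measure ℝ)
        (⋃ i ∈ Finset.range (N+1), ({τ i} ∪ {τ i + δ k})) = 0 := by
      intro k
      refine measure_biUnion_null_iff (Finset.countable_toSet _) |>.2 fun i _ => ?_
      rw [measure_union_null_iff]
      exact ⟨measure_singleton _, measure_singleton _⟩
    have key : ∀ k : ℕ, ∀ᵐ t ∂(volume.restrict (Set.Icc (0:ℝ) T)),
        |pwW N τ w₀ c (δ k) t - ubar t| ≤
          ∑ i ∈ Finset.range N,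
            Set.indicator (Set.Icc (τ i) (τ i + δ k)) (fun _ => B) t ∧
        ubar t = ∑ i ∈ Finset.range N,
            Set.indicator (Set.Ioo (τ i) (τ (i+1))) (fun _ => c i) t := by
      intro k
      have hae1 : ∀ᵐ t ∂(volume.restrict (Set.Icc (0:ℝ) T)),
          t ∉ ⋃ i ∈ Finset.range (N+1), ({τ i} ∪ {τ i + δ k}) :=
        ae_restrict_of_ae (measure_eq_zero_iff_ae_notMem.1 (hZmeas k))
      have hae2 : ∀ᵐ t ∂(volume.restrict (Set.Icc (0:ℝ) T)), t ∈ Set.Icc (0:ℝ) T :=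
        ae_restrict_mem measurableSet_Icc
      filter_upwards [hae1, hae2] with t htZ ht
      obtain ⟨i, hi, hti, hti'⟩ := tau_cover hmono hN t (by rw [hτ0]; exact ht.1)
        (by rw [hτN]; exact ht.2)
      have hne : ∀ j ≤ N, t ≠ τ j ∧ t ≠ τ j + δ k := by
        intro j hj
        constructor
        · intro h
          exact htZ (Set.mem_biUnion (x := j) (Finset.mem_range.2 (by omega))
            (Set.mem_union_left _ (by rw [h]; exact Set.mem_singleton _)))
        · intro h
          exact htZ (Set.mem_biUnion (x := j) (Finset.mem_range.2 (by omega))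
            (Set.mem_union_right _ (by rw [h]; exact Set.mem_singleton _)))
      have h1 : τ i < t := lt_of_le_of_ne hti (Ne.symm (hne i (by omega)).1)
      have h2 : t < τ (i+1) := lt_of_le_of_ne hti' (hne (i+1) (by omega)).1
      have h3 : t ≠ τ i + δ k := (hne i (by omega)).2
      have hubar_t : ubar t = c i := hc i hi t ⟨h1, h2⟩
      have husimp_t : (∑ j ∈ Finset.range N,
          Set.indicator (Set.Ioo (τ j) (τ (j+1))) (fun _ => c j) t) = c i := by
        rw [Finset.sum_eq_single_of_mem i (Finset.mem_range.2 hi)]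
        · exact Set.indicator_of_mem (Set.mem_Ioo.2 ⟨h1, h2⟩) _
        · intro j hj hji
          simp only [Finset.mem_range] at hj
          apply Set.indicator_of_notMem
          rcases Nat.lt_or_ge j i with h | h
          · have : τ (j+1) ≤ τ i := tau_mono hmono (j+1) i (by omega) (by omega)
            exact fun hmem => absurd hmem.2 (by linarith)
          · have hji' : i < j := by omega
            have : τ (i+1) ≤ τ j := tau_mono hmono (i+1) j (by omega) (by omega)
            exact fun hmem => absurd hmem.1 (by linarith)
      refine ⟨?_, by rw [hubar_t, husimp_t]⟩
      have hind_nonneg : ∀ j ∈ Finset.range N,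
          0 ≤ Set.indicator (Set.Icc (τ j) (τ j + δ k)) (fun _ => B) t :=
        fun j _ => Set.indicator_nonneg (fun _ _ => hB) _
      rcases lt_or_gt_of_ne h3 with h4 | h4
      · -- ramp : |diff| ≤ B, and indicator term i equals B
        have hWt := pwW_ramp (w₀ := w₀) (c := c) (hδpos k) hmono (hδgap k) hi h1.le h4.le
        have hDle : |pwD w₀ c i| ≤ B := by
          rw [hBdef]
          exact Finset.single_le_sum (f := fun j => |pwD w₀ c j|)
            (fun j _ => abs_nonneg _) (Finset.mem_range.2 hi)
        have hBle : B ≤ ∑ j ∈ Finset.range N,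
            Set.indicator (Set.Icc (τ j) (τ j + δ k)) (fun _ => B) t := by
          have : Set.indicator (Set.Icc (τ i) (τ i + δ k)) (fun _ => B) t = B :=
            Set.indicator_of_mem (Set.mem_Icc.2 ⟨h1.le, h4.le⟩) _
          calc B = Set.indicator (Set.Icc (τ i) (τ i + δ k)) (fun _ => B) t := this.symm
          _ ≤ _ := Finset.single_le_sum hind_nonneg (Finset.mem_range.2 hi)
        refine le_trans ?_ hBle
        rw [hWt, hubar_t]
        have hci : c i = pwF w₀ c i + pwD w₀ c i := by simp [pwD, pwF]
        rw [hci]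
        have hr0 : 0 ≤ pwR τ (δ k) i t := clamp01_nonneg _
        have hr1 : pwR τ (δ k) i t ≤ 1 := clamp01_le_one _
        have : pwF w₀ c i + pwD w₀ c i * pwR τ (δ k) i t - (pwF w₀ c i + pwD w₀ c i)
            = pwD w₀ c i * (pwR τ (δ k) i t - 1) := by ring
        rw [this, abs_mul]
        calc |pwD w₀ c i| * |pwR τ (δ k) i t - 1| ≤ |pwD w₀ c i| * 1 := by
              apply mul_le_mul_of_nonneg_left _ (abs_nonneg _)
              rw [abs_le]; constructor <;> linarith
        _ = |pwD w₀ c i| := mul_one _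
        _ ≤ B := hDle
      · -- flat : diff = 0
        have hWt := pwW_flat (w₀ := w₀) (c := c) (hδpos k) hmono (hδgap k) hi h4.le hti'
        rw [hWt, hubar_t, sub_self, abs_zero]
        exact Finset.sum_nonneg hind_nonneg
    -- upper bound on the integrals
    have hub : ∀ k : ℕ, ∫ t in Set.Icc (0:ℝ) T, |pwW N τ w₀ c (δ k) t - ubar t|
        ≤ N * B * δ k := by
      intro k
      have hubar_int : IntegrableOn ubar (Set.Icc (0:ℝ) T) volume := by
        apply Integrable.congr ((husimp k).integrableOn)
        filter_upwards [key k] with t ht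
        exact ht.2.symm
      have hW_int : IntegrableOn (pwW N τ w₀ c (δ k)) (Set.Icc (0:ℝ) T) volume :=
        pwW_continuous.integrableOn_Icc
      have habs_int : IntegrableOn (fun t => |pwW N τ w₀ c (δ k) t - ubar t|)
          (Set.Icc (0:ℝ) T) volume := (hW_int.sub hubar_int).abs
      have hg_int : Integrable (fun t => ∑ i ∈ Finset.range N,
          Set.indicator (Set.Icc (τ i) (τ i + δ k)) (fun _ => B) t) volume := by
        refine integrable_finset_sum _ fun i _ => ?_
        rw [integrable_indicator_iff measurableSet_Icc]
        refine integrableOn_const ?_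
        rw [Real.volume_Icc]
        exact ENNReal.ofReal_lt_top.ne
      calc ∫ t in Set.Icc (0:ℝ) T, |pwW N τ w₀ c (δ k) t - ubar t|
          ≤ ∫ t in Set.Icc (0:ℝ) T, ∑ i ∈ Finset.range N,
              Set.indicator (Set.Icc (τ i) (τ i + δ k)) (fun _ => B) t := by
            apply integral_mono_ae habs_int hg_int.integrableOn
            filter_upwards [key k] with t ht using ht.1
      _ ≤ ∫ t, ∑ i ∈ Finset.range N,
              Set.indicator (Set.Icc (τ i) (τ i + δ k)) (fun _ => B) t := by
            apply setIntegral_le_integral hg_int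
            filter_upwards with t
            exact Finset.sum_nonneg fun i _ => Set.indicator_nonneg (fun _ _ => hB) _
      _ = ∑ i ∈ Finset.range N, B * δ k := by
            rw [MeasureTheory.integral_finset_sum _ fun i _ => by
              rw [integrable_indicator_iff measurableSet_Icc]
              refine integrableOn_const ?_
              rw [Real.volume_Icc]
              exact ENNReal.ofReal_lt_top.ne]
            refine Finset.sum_congr rfl fun i _ => ?_
            rw [MeasureTheory.integral_indicator measurableSet_Icc, setIntegral_const,
              Real.volume_real_Icc_of_le (by linarith [hδpos k])]
            simp [mul_comm]
      _ = N * B * δ k := by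
            rw [Finset.sum_const, Finset.card_range]
            push_cast; ring
    -- squeeze
    have hlow : ∀ k : ℕ, 0 ≤ ∫ t in Set.Icc (0:ℝ) T, |pwW N τ w₀ c (δ k) t - ubar t| :=
      fun k => integral_nonneg fun t => abs_nonneg _
    have htend : Tendsto (fun k : ℕ => (N : ℝ) * B * δ k) atTop (nhds 0) := by
      have h1 : Tendsto (fun k : ℕ => ((N : ℝ) * B * G) / (k + 2)) atTop (nhds 0) := by
        have h2 := (tendsto_const_div_atTop_nhds_zero_nat ((N : ℝ) * B * G)).comp
          (tendsto_add_atTop_nat 2)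
        have he : (fun k : ℕ => ((N : ℝ) * B * G) / (k + 2)) =
            ((fun n : ℕ => ((N : ℝ) * B * G) / n) ∘ fun a => a + 2) := by
          funext k
          simp only [Function.comp]
          push_cast
          ring
        rw [he]
        exact h2
      convert h1 using 2 with k
      rw [hδdef]
      ring
    exact tendsto_of_tendsto_of_tendsto_of_le_of_le tendsto_const_nhds htend hlow hub
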